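/- Let ω = exp(2πi/3), let α ∈ ℂ, and set x = h_0(α), x* = h_0(−α). For every z ∈ ℂ satisfying |z · exp(ω^k · α)| < 1 for each k ∈ {0, 1, 2}, the ordinary generating function of the main-stream Tchebycheff 3-polynomials converges and Σ_{n≥0} h_0(n·α) · z^n = (1 − 2·x·z + x*·z²) / (1 − 3·x·z + 3·x*·z² − z³). -/

import Mathlib

open Complex Finset

/-- `ω = exp(2πi/3)`, the primitive cube root of unity. -/
noncomputable def om3 : ℂ := Complex.exp (2 * Real.pi * Complex.I / 3)

/-- The third-order hyperbolic function
`h_k(z) = (1/3) · Σ_{s=0}^{2} ω^{−k·s} · exp(ω^s · z)`. -/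
noncomputable def hfun3 (k : ℕ) (z : ℂ) : ℂ :=
  (1 / (3 : ℂ)) * ∑ s ∈ Finset.range 3, om3 ^ (-((k * s : ℕ) : ℤ)) * Complex.exp (om3 ^ s * z)

lemma om3_cube : om3 ^ 3 = 1 := by
  rw [om3, ← Complex.exp_nat_mul]
  have : ((3 : ℕ) : ℂ) * (2 * Real.pi * Complex.I / 3) = 2 * Real.pi * Complex.I := by
    push_cast; ring
  rw [this, Complex.exp_two_pi_mul_I]

lemma om3_ne_one : om3 ≠ 1 := by
  rw [om3, Ne, Complex.exp_eq_one_iff]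
  rintro ⟨n, hn⟩
  have h2 : (2 * Real.pi * Complex.I : ℂ) ≠ 0 := by
    simp [Real.pi_ne_zero, Complex.I_ne_zero, Complex.ofReal_ne_zero]
  have h3 : (1 : ℂ) * (2 * Real.pi * Complex.I) = ((n * 3 : ℤ) : ℂ) * (2 * Real.pi * Complex.I) := by
    push_cast
    linear_combination (3 : ℂ) * hn
  have h4 := mul_right_cancel₀ h2 h3
  have h5 : (1 : ℤ) = n * 3 := by exact_mod_cast h4
  omega

lemma om3_sum : 1 + om3 + om3 ^ 2 = 0 := by
  have h : (om3 - 1) * (om3 ^ 2 + om3 + 1) = 0 := by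
    linear_combination om3_cube
  rcases mul_eq_zero.1 h with h1 | h2
  · exact absurd (sub_eq_zero.1 h1) om3_ne_one
  · linear_combination h2

/-- Ordinary generating function of the main-stream Tchebycheff 3-polynomials:
`Σ_{n≥0} h_0(nα)·zⁿ = (1 − 2xz + x*z²)/(1 − 3xz + 3x*z² − z³)`
with `x = h_0(α)`, `x* = h_0(−α)`. -/
theorem ogf_main_stream (α z : ℂ)
    (hz : ∀ k < 3, ‖z * Complex.exp (om3 ^ k * α)‖ < 1) :
    HasSum (fun n : ℕ => hfun3 0 ((n : ℂ) * α) * z ^ n)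
      ((1 - 2 * hfun3 0 α * z + hfun3 0 (-α) * z ^ 2) /
        (1 - 3 * hfun3 0 α * z + 3 * hfun3 0 (-α) * z ^ 2 - z ^ 3)) := by
  set a := Complex.exp (om3 ^ 0 * α) with ha_def
  set b := Complex.exp (om3 ^ 1 * α) with hb_def
  set c := Complex.exp (om3 ^ 2 * α) with hc_def
  have h0 := hz 0 (by norm_num)
  have h1 := hz 1 (by norm_num)
  have h2 := hz 2 (by norm_num)
  rw [← ha_def] at h0; rw [← hb_def] at h1; rw [← hc_def] at h2
  -- product relations
  have hbc : b * c = Complex.exp (-α) := by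
    rw [hb_def, hc_def, ← Complex.exp_add]
    congr 1
    linear_combination α * om3_sum
  have hac : a * c = Complex.exp (-(om3 * α)) := by
    rw [ha_def, hc_def, ← Complex.exp_add]
    congr 1
    linear_combination α * om3_sum
  have hab : a * b = Complex.exp (-(om3 ^ 2 * α)) := by
    rw [ha_def, hb_def, ← Complex.exp_add]
    congr 1
    linear_combination α * om3_sum
  have habc : a * (b * c) = 1 := by
    rw [hbc, ha_def, ← Complex.exp_add]
    simp
  -- values of hfun3
  have hX : hfun3 0 α = (1 / 3) * (a + b + c) := by
    rw [hfun3]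
    simp only [Finset.sum_range_succ, Finset.sum_range_zero, Nat.zero_mul, Nat.cast_zero,
      neg_zero, zpow_zero, one_mul, zero_add, CharP.cast_eq_zero]
    rfl
  have hXs : hfun3 0 (-α) = (1 / 3) * (b * c + a * c + a * b) := by
    rw [hfun3]
    simp only [Finset.sum_range_succ, Finset.sum_range_zero, Nat.zero_mul, Nat.cast_zero,
      neg_zero, zpow_zero, one_mul, zero_add, CharP.cast_eq_zero]
    have r0 : om3 ^ 0 * (-α) = -α := by ring
    have r1 : om3 ^ 1 * (-α) = -(om3 * α) := by ring
    have r2 : om3 ^ 2 * (-α) = -(om3 ^ 2 * α) := by ring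
    rw [r0, r1, r2, ← hbc, ← hac, ← hab]
  -- the geometric series
  have ga : HasSum (fun n : ℕ => (z * a) ^ n) (1 - z * a)⁻¹ := by
    refine hasSum_geometric_of_norm_lt_one ?_
    simpa using h0
  have gb : HasSum (fun n : ℕ => (z * b) ^ n) (1 - z * b)⁻¹ := by
    refine hasSum_geometric_of_norm_lt_one ?_
    simpa using h1
  have gc : HasSum (fun n : ℕ => (z * c) ^ n) (1 - z * c)⁻¹ := by
    refine hasSum_geometric_of_norm_lt_one ?_
    simpa using h2
  have G := (((ga.add gb).add gc).mul_left ((1 : ℂ) / 3))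
  -- nonvanishing
  have na : 1 - z * a ≠ 0 := by
    intro h
    rw [sub_eq_zero] at h
    rw [← h] at h0
    simp at h0
  have nb : 1 - z * b ≠ 0 := by
    intro h
    rw [sub_eq_zero] at h
    rw [← h] at h1
    simp at h1
  have nc : 1 - z * c ≠ 0 := by
    intro h
    rw [sub_eq_zero] at h
    rw [← h] at h2
    simp at h2
  -- identify the terms
  have hterm : ∀ n : ℕ, hfun3 0 ((n : ℂ) * α) * z ^ n
      = (1 : ℂ) / 3 * (((z * a) ^ n + (z * b) ^ n) + (z * c) ^ n) := by
    intro n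
    have ea : Complex.exp (om3 ^ 0 * ((n : ℂ) * α)) = a ^ n := by
      rw [ha_def, ← Complex.exp_nat_mul]; ring_nf
    have eb : Complex.exp (om3 ^ 1 * ((n : ℂ) * α)) = b ^ n := by
      rw [hb_def, ← Complex.exp_nat_mul]; ring_nf
    have ec : Complex.exp (om3 ^ 2 * ((n : ℂ) * α)) = c ^ n := by
      rw [hc_def, ← Complex.exp_nat_mul]; ring_nf
    rw [hfun3]
    simp only [Finset.sum_range_succ, Finset.sum_range_zero, ea, eb, ec]
    simp only [Nat.zero_mul, Nat.cast_zero, neg_zero, zpow_zero, one_mul, zero_add]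
    ring
  -- identify the value
  have hval : (1 : ℂ) / 3 * (((1 - z * a)⁻¹ + (1 - z * b)⁻¹) + (1 - z * c)⁻¹)
      = (1 - 2 * hfun3 0 α * z + hfun3 0 (-α) * z ^ 2) /
        (1 - 3 * hfun3 0 α * z + 3 * hfun3 0 (-α) * z ^ 2 - z ^ 3) := by
    rw [hX, hXs]
    have hden : 1 - 3 * ((1 : ℂ) / 3 * (a + b + c)) * z
        + 3 * ((1 : ℂ) / 3 * (b * c + a * c + a * b)) * z ^ 2 - z ^ 3
        = (1 - z * a) * (1 - z * b) * (1 - z * c) := by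
      linear_combination (z ^ 3 : ℂ) * habc
    rw [hden]
    field_simp
    ring
  rw [← hval]
  exact G.congr_fun fun n => hterm n
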